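/- Let R be a commutative unital ring and V a set with |V| ≥ 6. Let Γ act transitively on V, let E(Γ,V,R) = E_V(R) ⋊ Γ be the elementary enrichment, and let N be a normal subgroup of E(Γ,V,R). If there exist distinct v, w ∈ V with E_{v,w}(1) ∈ N, then E_V(R) ≤ N. -/

import Mathlib

/-- The rank-one endomorphism of the free module `R^V` sending `u` to
`(u v) • (single w 1)`. -/
noncomputable def elemMap (R : Type*) [CommRing R] {V : Type*} (v w : V) :
    Module.End R (V →₀ R) :=
  (Finsupp.lsingle w).comp (Finsupp.lapply v)

lemma elemMap_mul_self {R : Type*} [CommRing R] {V : Type*} {v w : V} (h : v ≠ w) :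
    (elemMap R v w) * (elemMap R v w) = 0 := by
  apply LinearMap.ext
  intro u
  simp [elemMap, Module.End.mul_apply, Finsupp.single_apply, h, Ne.symm h]

/-- The transvection `E_{v,w}(r)` of the free module `R^V`. -/
noncomputable def transvection (R : Type*) [CommRing R] {V : Type*} (v w : V)
    (h : v ≠ w) (r : R) : (Module.End R (V →₀ R))ˣ where
  val := 1 + r • elemMap R v w
  inv := 1 + (-r) • elemMap R v w
  val_inv := by
    have key : (r • elemMap R v w) * ((-r) • elemMap R v w) = 0 := by
      rw [smul_mul_smul_comm, elemMap_mul_self h, smul_zero]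
    rw [mul_add, mul_one, add_mul, one_mul, key, add_zero, add_assoc, ← add_smul,
      add_neg_cancel, zero_smul, add_zero]
  inv_val := by
    have key : ((-r) • elemMap R v w) * (r • elemMap R v w) = 0 := by
      rw [smul_mul_smul_comm, elemMap_mul_self h, smul_zero]
    rw [mul_add, mul_one, add_mul, one_mul, key, add_zero, add_assoc, ← add_smul,
      neg_add_cancel, zero_smul, add_zero]

/-- `E_V(R)`: the subgroup of `Aut_R(R^V)` generated by all transvections. -/
noncomputable def EV (R : Type*) [CommRing R] (V : Type*) :
    Subgroup (Module.End R (V →₀ R))ˣ :=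
  Subgroup.closure {u | ∃ (v w : V) (h : v ≠ w) (r : R), u = transvection R v w h r}

/-- A transvection, as an element of `E_V(R)`. -/
noncomputable def transEV (R : Type*) [CommRing R] {V : Type*} (v w : V) (h : v ≠ w)
    (r : R) : EV R V :=
  ⟨transvection R v w h r, Subgroup.subset_closure ⟨v, w, h, r, rfl⟩⟩

lemma elemMap_mul_same {R : Type*} [CommRing R] {V : Type*} (a b c : V) :
    elemMap R a b * elemMap R c a = elemMap R c b := by
  apply LinearMap.ext
  intro u
  simp [elemMap, Module.End.mul_apply]

lemma elemMap_mul_of_ne {R : Type*} [CommRing R] {V : Type*} {a d : V} (b c : V) (h : d ≠ a) :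
    elemMap R a b * elemMap R c d = 0 := by
  apply LinearMap.ext
  intro u
  simp [elemMap, Module.End.mul_apply, Finsupp.single_eq_of_ne' h]

lemma end_comm {R : Type*} [CommRing R] {V : Type*} {v x w : V} (hvx : v ≠ x) (hxw : x ≠ w)
    (hvw : v ≠ w) (r s : R) :
    (1 + s • elemMap R x w) * (1 + r • elemMap R v x) * (1 + (-s) • elemMap R x w) *
      (1 + (-r) • elemMap R v x) = 1 + (r * s) • elemMap R v w := by
  have h21 : elemMap R x w * elemMap R v x = elemMap R v w := elemMap_mul_same x w v
  have h11 : elemMap R v x * elemMap R v x = 0 := elemMap_mul_of_ne x v hvx.symm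
  have h22 : elemMap R x w * elemMap R x w = 0 := elemMap_mul_of_ne w x hxw.symm
  have h12 : elemMap R v x * elemMap R x w = 0 := elemMap_mul_of_ne x x (Ne.symm hvw)
  have h13 : elemMap R v x * elemMap R v w = 0 := elemMap_mul_of_ne x v (Ne.symm hvw)
  have h23 : elemMap R x w * elemMap R v w = 0 := elemMap_mul_of_ne w v hxw.symm
  have h31 : elemMap R v w * elemMap R v x = 0 := elemMap_mul_of_ne w v hvx.symm
  have h32 : elemMap R v w * elemMap R x w = 0 := elemMap_mul_of_ne w x (Ne.symm hvw)
  simp only [mul_add, add_mul, mul_one, one_mul, smul_mul_smul_comm, h21, h11, h22, h12, h13,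
    h23, h31, h32, smul_zero, add_zero, zero_add, mul_zero, zero_mul, smul_mul_assoc,
    mul_smul_comm]
  module

lemma transEV_comm {R : Type*} [CommRing R] {V : Type*} {v x w : V} (hvx : v ≠ x)
    (hxw : x ≠ w) (hvw : v ≠ w) (r s : R) :
    transEV R x w hxw s * transEV R v x hvx r * (transEV R x w hxw s)⁻¹ *
      (transEV R v x hvx r)⁻¹ = transEV R v w hvw (r * s) := by
  apply Subtype.ext
  apply Units.ext
  exact end_comm hvx hxw hvw r s

/-- in the elementary enrichment `E(Γ,V,R) = E_V(R) ⋊ Γ`, with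
`|V| ≥ 6` and `Γ` acting transitively on `V` (and on `E_V(R)` by relabelling
transvections), any normal subgroup `N` containing some transvection
`E_{v,w}(1)` contains all of `E_V(R)`. -/
theorem elementary_enrichment_normal_subgroup {Γ V : Type*} [Group Γ] [MulAction Γ V]
    [MulAction.IsPretransitive Γ V] (R : Type*) [CommRing R]
    (hV : ∃ s : Finset V, 6 ≤ s.card)
    (φ : Γ →* MulAut (EV R V))
    (hφ : ∀ (g : Γ) (v w : V) (h : v ≠ w) (r : R),
      φ g (transEV R v w h r) =
        transEV R (g • v) (g • w) (fun e => h (MulAction.injective g e)) r)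
    (N : Subgroup (EV R V ⋊[φ] Γ)) (hN : N.Normal)
    (v w : V) (hvw : v ≠ w)
    (hmem : SemidirectProduct.inl (transEV R v w hvw 1) ∈ N) :
    ∀ x : EV R V, SemidirectProduct.inl x ∈ N := by
  classical
  -- existence of fresh points
  have hex : ∀ t : Finset V, t.card ≤ 5 → ∃ x : V, x ∉ t := by
    intro t ht
    by_contra hc
    push_neg at hc
    obtain ⟨s, hs⟩ := hV
    have : s ⊆ t := fun a _ => hc a
    have := Finset.card_le_card this
    omega
  -- "extend target": from E_{a,b}(r) ∈ N conclude E_{a,c}(r*s) ∈ N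
  have key : ∀ (a b c : V) (hab : a ≠ b) (hbc : b ≠ c) (hac : a ≠ c) (r s : R),
      SemidirectProduct.inl (transEV R a b hab r) ∈ N →
        SemidirectProduct.inl (transEV R a c hac (r * s)) ∈ N := by
    intro a b c hab hbc hac r s hn
    have h1 := hN.conj_mem _ hn (SemidirectProduct.inl (transEV R b c hbc s))
    have h2 := mul_mem h1 (inv_mem hn)
    have heq : SemidirectProduct.inl (transEV R b c hbc s) *
        SemidirectProduct.inl (transEV R a b hab r) *
        (SemidirectProduct.inl (transEV R b c hbc s))⁻¹ *
        (SemidirectProduct.inl (transEV R a b hab r))⁻¹ =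
        (SemidirectProduct.inl (transEV R a c hac (r * s)) :
          EV R V ⋊[φ] Γ) := by
      rw [← map_inv, ← map_inv, ← map_mul, ← map_mul, ← map_mul,
        transEV_comm hab hbc hac r s]
    rwa [heq] at h2
  -- "change source": from E_{b,c}(s) ∈ N conclude E_{a,c}(r*s) ∈ N
  have key2 : ∀ (a b c : V) (hab : a ≠ b) (hbc : b ≠ c) (hac : a ≠ c) (r s : R),
      SemidirectProduct.inl (transEV R b c hbc s) ∈ N →
        SemidirectProduct.inl (transEV R a c hac (r * s)) ∈ N := by
    intro a b c hab hbc hac r s hn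
    have h1 := hN.conj_mem _ (inv_mem hn) (SemidirectProduct.inl (transEV R a b hab r))
    have h2 := mul_mem hn h1
    have heq : SemidirectProduct.inl (transEV R b c hbc s) *
        (SemidirectProduct.inl (transEV R a b hab r) *
          (SemidirectProduct.inl (transEV R b c hbc s))⁻¹ *
          (SemidirectProduct.inl (transEV R a b hab r))⁻¹) =
        (SemidirectProduct.inl (transEV R a c hac (r * s)) :
          EV R V ⋊[φ] Γ) := by
      rw [← mul_assoc, ← mul_assoc, ← map_inv, ← map_inv, ← map_mul, ← map_mul, ← map_mul,
        transEV_comm hab hbc hac r s]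
    rwa [heq] at h2
  -- all transvections are in N
  have allT : ∀ (a b : V) (hab : a ≠ b) (r : R),
      SemidirectProduct.inl (transEV R a b hab r) ∈ N := by
    intro a b hab r
    have c1 : ({b} : Finset V).card = 1 := Finset.card_singleton b
    have c2 := Finset.card_insert_le a ({b} : Finset V)
    have c3 := Finset.card_insert_le w ({a, b} : Finset V)
    have c4 := Finset.card_insert_le v ({w, a, b} : Finset V)
    obtain ⟨x, hx⟩ := hex {v, w, a, b} (by omega)
    have c5 := Finset.card_insert_le v ({w, a, b, x} : Finset V)
    have c6 := Finset.card_insert_le w ({a, b, x} : Finset V)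
    have c7 := Finset.card_insert_le a ({b, x} : Finset V)
    have c8 := Finset.card_insert_le b ({x} : Finset V)
    have c9 : ({x} : Finset V).card = 1 := Finset.card_singleton x
    obtain ⟨y, hy⟩ := hex {v, w, a, b, x} (by omega)
    simp only [Finset.mem_insert, Finset.mem_singleton, not_or] at hx hy
    obtain ⟨hxv, hxw, hxa, hxb⟩ := hx
    obtain ⟨hyv, hyw, hya, hyb, hyx⟩ := hy
    have s1 : SemidirectProduct.inl (transEV R x w hxw (r * 1)) ∈ N :=
      key2 x v w hxv hvw hxw r 1 hmem
    have s2 : SemidirectProduct.inl (transEV R x y (Ne.symm hyx) (r * 1 * 1)) ∈ N :=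
      key x w y hxw (fun h => hyw h.symm) (Ne.symm hyx) (r * 1) 1 s1
    have s3 : SemidirectProduct.inl (transEV R a y (Ne.symm hya) (1 * (r * 1 * 1))) ∈ N :=
      key2 a x y (Ne.symm hxa) (Ne.symm hyx) (Ne.symm hya) 1 (r * 1 * 1) s2
    have s4 : SemidirectProduct.inl (transEV R a b hab (1 * (r * 1 * 1) * 1)) ∈ N :=
      key a y b (Ne.symm hya) hyb hab (1 * (r * 1 * 1)) 1 s3
    simpa using s4
  -- conclude by closure induction
  intro x
  obtain ⟨u, hu⟩ := x
  refine Subgroup.closure_induction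
    (p := fun g hg => SemidirectProduct.inl (⟨g, hg⟩ : EV R V) ∈ N) ?_ ?_ ?_ ?_ hu
  · rintro g ⟨a, b, hab, r, rfl⟩
    exact allT a b hab r
  · change SemidirectProduct.inl (1 : EV R V) ∈ N
    rw [map_one]
    exact one_mem N
  · intro g h hg hh ihg ihh
    have : (⟨g * h, mul_mem hg hh⟩ : EV R V) = ⟨g, hg⟩ * ⟨h, hh⟩ := rfl
    rw [this, map_mul]
    exact mul_mem ihg ihh
  · intro g hg ihg
    have : (⟨g⁻¹, inv_mem hg⟩ : EV R V) = (⟨g, hg⟩ : EV R V)⁻¹ := rfl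
    rw [this, map_inv]
    exact inv_mem ihg
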